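/- Continuous dependence on the initial angle: the map (φ, t) ↦ A φ t is jointly continuous as a function ℝ × ℝ → ℝ. -/

import Mathlib

/-- `α` is a solution of the inverted-pendulum equation
`α'' t = -g * cos (α t) + u t * sin (α t)`. -/
def IsPendulumSolution (g : ℝ) (u : ℝ → ℝ) (α : ℝ → ℝ) : Prop :=
  ContDiff ℝ 2 α ∧
    ∀ t : ℝ, deriv (deriv α) t = -g * Real.cos (α t) + u t * Real.sin (α t)

lemma pendulum_lipschitz_sin : LipschitzWith 1 Real.sin := by
  apply lipschitzWith_of_nnnorm_deriv_le Real.differentiable_sin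
  intro x
  rw [Real.deriv_sin]
  simp [← NNReal.coe_le_coe, Real.abs_cos_le_one]

lemma pendulum_lipschitz_cos : LipschitzWith 1 Real.cos := by
  apply lipschitzWith_of_nnnorm_deriv_le Real.differentiable_cos
  intro x
  rw [Real.deriv_cos']
  simp [← NNReal.coe_le_coe, Real.abs_sin_le_one]

/-- Key Grönwall estimate: on a compact time interval, solutions starting at rest
depend Lipschitz-continuously on the initial angle. -/
lemma pendulum_key (g : ℝ) (hg : 0 < g)
    (u : ℝ → ℝ) (hu : Continuous u) (A : ℝ → ℝ → ℝ)
    (hA : ∀ φ : ℝ, IsPendulumSolution g u (A φ) ∧ A φ 0 = φ ∧ deriv (A φ) 0 = 0)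
    (T : ℝ) (hT : 0 < T) :
    ∃ C : ℝ, ∀ φ ψ : ℝ, ∀ t ∈ Set.Icc (-T) T, |A φ t - A ψ t| ≤ C * |φ - ψ| := by
  -- basic differentiability facts
  have hd1 : ∀ φ t, HasDerivAt (A φ) (deriv (A φ) t) t := fun φ t =>
    (((hA φ).1.1.differentiable (by norm_num)) t).hasDerivAt
  have hdc : ∀ φ, Differentiable ℝ (deriv (A φ)) := by
    intro φ
    have h2 : ContDiff ℝ ((1 : ℕ) + 1) (A φ) := by norm_num [(hA φ).1.1]
    exact ((contDiff_succ_iff_deriv.mp h2).2.2).differentiable (by norm_num)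
  have hd2 : ∀ φ t, HasDerivAt (deriv (A φ))
      (-g * Real.cos (A φ t) + u t * Real.sin (A φ t)) t := by
    intro φ t
    have := ((hdc φ) t).hasDerivAt
    rwa [(hA φ).1.2 t] at this
  -- the first order system
  set X : ℝ → ℝ → ℝ × ℝ := fun φ t => (A φ t, deriv (A φ) t) with hXdef
  have hX : ∀ φ t, HasDerivAt (X φ)
      (deriv (A φ) t, -g * Real.cos (A φ t) + u t * Real.sin (A φ t)) t :=
    fun φ t => (hd1 φ t).prodMk (hd2 φ t)
  have hXcont : ∀ φ, Continuous (X φ) := fun φ =>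
    ((hA φ).1.1.continuous).prodMk (hdc φ).continuous
  -- bound on u over the interval
  obtain ⟨M, hM⟩ := (isCompact_Icc (a := -T) (b := T)).exists_bound_of_continuousOn
    hu.continuousOn
  have hM0 : 0 ≤ M := le_trans (norm_nonneg (u 0)) (hM 0 ⟨by linarith, by linarith⟩)
  -- the (truncated) vector field
  set v : ℝ → ℝ × ℝ → ℝ × ℝ := fun t x =>
    (x.2, -g * Real.cos x.1 + u (max (-T) (min t T)) * Real.sin x.1) with hvdef
  set Kr : ℝ := max 1 (g + M) with hKrdef
  have hKr1 : (1 : ℝ) ≤ Kr := le_max_left _ _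
  have hKr0 : (0 : ℝ) ≤ Kr := by linarith
  set K : NNReal := ⟨Kr, hKr0⟩ with hKdef
  have hKcoe : (K : ℝ) = Kr := rfl
  have hproj : ∀ t : ℝ, max (-T) (min t T) ∈ Set.Icc (-T) T := fun t =>
    ⟨le_max_left _ _, max_le (by linarith) (min_le_right _ _)⟩
  have hub : ∀ t : ℝ, |u (max (-T) (min t T))| ≤ M := fun t => hM _ (hproj t)
  have heq : ∀ t ∈ Set.Icc (-T) T, max (-T) (min t T) = t := by
    intro t ht
    rw [min_eq_left ht.2, max_eq_right ht.1]
  -- Lipschitz bound for v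
  have hLip : ∀ t, LipschitzWith K (v t) := by
    intro t
    apply LipschitzWith.of_dist_le_mul
    intro x y
    rw [hKcoe, Prod.dist_eq (x := v t x)]
    have hfst : dist x.1 y.1 ≤ dist x y := by rw [Prod.dist_eq]; exact le_max_left _ _
    have hsnd : dist x.2 y.2 ≤ dist x y := by rw [Prod.dist_eq]; exact le_max_right _ _
    apply max_le
    · calc dist (v t x).1 (v t y).1 = dist x.2 y.2 := rfl
        _ ≤ dist x y := hsnd
        _ ≤ Kr * dist x y := le_mul_of_one_le_left dist_nonneg hKr1
    · have hc : |Real.cos x.1 - Real.cos y.1| ≤ |x.1 - y.1| := by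
        have := pendulum_lipschitz_cos.dist_le_mul x.1 y.1
        simpa [Real.dist_eq] using this
      have hs : |Real.sin x.1 - Real.sin y.1| ≤ |x.1 - y.1| := by
        have := pendulum_lipschitz_sin.dist_le_mul x.1 y.1
        simpa [Real.dist_eq] using this
      set c := u (max (-T) (min t T)) with hcdef
      calc dist (v t x).2 (v t y).2
          = |(-g * Real.cos x.1 + c * Real.sin x.1) -
              (-g * Real.cos y.1 + c * Real.sin y.1)| := Real.dist_eq _ _
        _ = |(-g) * (Real.cos x.1 - Real.cos y.1) + c * (Real.sin x.1 - Real.sin y.1)| := by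
            ring_nf
        _ ≤ |(-g) * (Real.cos x.1 - Real.cos y.1)| + |c * (Real.sin x.1 - Real.sin y.1)| :=
            abs_add_le _ _
        _ = g * |Real.cos x.1 - Real.cos y.1| + |c| * |Real.sin x.1 - Real.sin y.1| := by
            rw [abs_mul, abs_mul, abs_neg, abs_of_pos hg]
        _ ≤ g * |x.1 - y.1| + M * |x.1 - y.1| := by
            gcongr
            exact hub t
        _ = (g + M) * |x.1 - y.1| := by ring
        _ ≤ Kr * dist x y := by
            apply mul_le_mul (le_max_right _ _) _ (abs_nonneg _) hKr0
            rw [← Real.dist_eq]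
            exact hfst
  -- solutions solve the truncated ODE on the interval
  have hXv : ∀ φ, ∀ t ∈ Set.Icc (-T) T, HasDerivAt (X φ) (v t (X φ t)) t := by
    intro φ t ht
    have h := hX φ t
    simp only [hvdef]
    rw [heq t ht]
    exact h
  -- initial distance
  have hinit : ∀ φ ψ : ℝ, dist (X φ 0) (X ψ 0) = |φ - ψ| := by
    intro φ ψ
    simp [hXdef, Prod.dist_eq, Real.dist_eq, (hA φ).2.1, (hA ψ).2.1, (hA φ).2.2, (hA ψ).2.2,
      abs_nonneg]
  -- forward Grönwall on [0, T]
  have fwd : ∀ φ ψ : ℝ, ∀ t ∈ Set.Icc (0 : ℝ) T,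
      dist (X φ t) (X ψ t) ≤ |φ - ψ| * Real.exp (Kr * (t - 0)) := by
    intro φ ψ
    have := dist_le_of_trajectories_ODE (v := v) (K := K) hLip
      ((hXcont φ).continuousOn)
      (fun t ht => (hXv φ t ⟨by linarith [ht.1], ht.2.le⟩).hasDerivWithinAt)
      ((hXcont ψ).continuousOn)
      (fun t ht => (hXv ψ t ⟨by linarith [ht.1], ht.2.le⟩).hasDerivWithinAt)
      (le_of_eq (hinit φ ψ))
    simpa [hKcoe] using this
  -- time reversal
  set w : ℝ → ℝ × ℝ → ℝ × ℝ := fun τ x => -v (-τ) x with hwdef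
  have hwLip : ∀ τ, LipschitzWith K (w τ) := by
    intro τ
    apply LipschitzWith.of_dist_le_mul
    intro x y
    have : dist (w τ x) (w τ y) = dist (v (-τ) x) (v (-τ) y) := dist_neg_neg _ _
    rw [this]
    exact (hLip (-τ)).dist_le_mul x y
  have hYv : ∀ φ, ∀ τ ∈ Set.Icc (0 : ℝ) T,
      HasDerivAt (fun τ => X φ (-τ)) (w τ (X φ (-τ))) τ := by
    intro φ τ hτ
    have h1 : HasDerivAt (X φ) (v (-τ) (X φ (-τ))) (-τ) :=
      hXv φ (-τ) ⟨by linarith [hτ.2], by linarith [hτ.1]⟩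
    have h2 : HasDerivAt (fun τ : ℝ => -τ) (-1) τ := by
      exact hasDerivAt_neg' τ
    have h3 := h1.scomp τ h2
    simpa [hwdef, neg_one_smul, Function.comp_def] using h3
  have bwd : ∀ φ ψ : ℝ, ∀ τ ∈ Set.Icc (0 : ℝ) T,
      dist (X φ (-τ)) (X ψ (-τ)) ≤ |φ - ψ| * Real.exp (Kr * (τ - 0)) := by
    intro φ ψ
    have := dist_le_of_trajectories_ODE (v := w) (K := K) hwLip
      (f := fun τ => X φ (-τ)) (g := fun τ => X ψ (-τ)) (a := 0) (b := T)
      (((hXcont φ).comp continuous_neg).continuousOn)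
      (fun τ hτ => (hYv φ τ ⟨hτ.1, hτ.2.le⟩).hasDerivWithinAt)
      (((hXcont ψ).comp continuous_neg).continuousOn)
      (fun τ hτ => (hYv ψ τ ⟨hτ.1, hτ.2.le⟩).hasDerivWithinAt)
      (by simpa using le_of_eq (hinit φ ψ))
    simpa [hKcoe] using this
  -- combine
  refine ⟨Real.exp (Kr * T), ?_⟩
  intro φ ψ t ht
  have key : dist (X φ t) (X ψ t) ≤ |φ - ψ| * Real.exp (Kr * T) := by
    rcases le_or_gt 0 t with h | h
    · have := fwd φ ψ t ⟨h, ht.2⟩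
      refine this.trans (mul_le_mul_of_nonneg_left (Real.exp_le_exp.mpr (by nlinarith [ht.2, hKr0])) (abs_nonneg _))
    · have := bwd φ ψ (-t) ⟨by linarith, by linarith [ht.1]⟩
      rw [neg_neg] at this
      refine this.trans (mul_le_mul_of_nonneg_left (Real.exp_le_exp.mpr (by nlinarith [ht.1, hKr0])) (abs_nonneg _))
  have hfst : |A φ t - A ψ t| ≤ dist (X φ t) (X ψ t) := by
    rw [Prod.dist_eq, ← Real.dist_eq]
    exact le_max_left _ _
  calc |A φ t - A ψ t| ≤ dist (X φ t) (X ψ t) := hfst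
    _ ≤ |φ - ψ| * Real.exp (Kr * T) := key
    _ = Real.exp (Kr * T) * |φ - ψ| := mul_comm _ _

/-- Continuous dependence on the initial angle: if `A φ` is the solution
starting at rest at angle `φ`, then `(φ, t) ↦ A φ t` is jointly continuous. -/
theorem pendulum_continuous_dependence (g : ℝ) (hg : 0 < g)
    (u : ℝ → ℝ) (hu : Continuous u) (A : ℝ → ℝ → ℝ)
    (hA : ∀ φ : ℝ, IsPendulumSolution g u (A φ) ∧ A φ 0 = φ ∧ deriv (A φ) 0 = 0) :
    Continuous fun p : ℝ × ℝ => A p.1 p.2 := by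
  rw [continuous_iff_continuousAt]
  rintro ⟨φ₀, t₀⟩
  set T : ℝ := |t₀| + 1 with hTdef
  have hT : 0 < T := by positivity
  obtain ⟨C, hC⟩ := pendulum_key g hg u hu A hA T hT
  have hcont0 : Continuous (A φ₀) := (hA φ₀).1.1.continuous
  have h1 : Filter.Tendsto (fun p : ℝ × ℝ => A φ₀ p.2) (nhds (φ₀, t₀)) (nhds (A φ₀ t₀)) :=
    (hcont0.comp continuous_snd).tendsto (φ₀, t₀)
  have hmem : Set.Icc (-T) T ∈ nhds t₀ :=
    Icc_mem_nhds (by cases abs_cases t₀ <;> simp [hTdef] <;> linarith)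
      (by cases abs_cases t₀ <;> simp [hTdef] <;> linarith)
  have hnb : ∀ᶠ p : ℝ × ℝ in nhds (φ₀, t₀), p.2 ∈ Set.Icc (-T) T :=
    continuousAt_snd.preimage_mem_nhds hmem
  have h2 : Filter.Tendsto (fun p : ℝ × ℝ => A p.1 p.2 - A φ₀ p.2)
      (nhds (φ₀, t₀)) (nhds 0) := by
    apply squeeze_zero_norm' (a := fun p : ℝ × ℝ => C * |p.1 - φ₀|)
    · filter_upwards [hnb] with p hp
      have := hC p.1 φ₀ p.2 hp
      simpa [Real.norm_eq_abs] using this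
    · have : Filter.Tendsto (fun p : ℝ × ℝ => C * |p.1 - φ₀|) (nhds (φ₀, t₀))
          (nhds (C * |φ₀ - φ₀|)) :=
        (continuous_const.mul ((continuous_fst.sub continuous_const).abs)).tendsto (φ₀, t₀)
      simpa using this
  have h3 := h2.add h1
  rw [zero_add] at h3
  have : (fun p : ℝ × ℝ => A p.1 p.2 - A φ₀ p.2 + A φ₀ p.2) =
      fun p : ℝ × ℝ => A p.1 p.2 := by funext p; ring
  rw [this] at h3
  exact h3
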